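/- If a, b, c are functions each either meromorphic on ℂ or identically ∞ (i.e., holomorphic maps from ℂ to the Riemann sphere), and there exists ε > 0 such that σ(a(z),b(z))·σ(a(z),c(z))·σ(b(z),c(z)) ≥ ε for all z ∈ ℂ (where σ is the spherical metric on the Riemann sphere), then a, b and c are all constant. -/

import Mathlib

open Complex OnePoint Filter Topology Metric

/-- Chordal metric on the Riemann sphere of diameter 2. -/
noncomputable def chordal : OnePoint ℂ → OnePoint ℂ → ℝ
  | (z : ℂ), (w : ℂ) => 2 * ‖z - w‖ /
      (Real.sqrt (1 + ‖z‖ ^ 2) * Real.sqrt (1 + ‖w‖ ^ 2))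
  | (z : ℂ), ∞ => 2 / Real.sqrt (1 + ‖z‖ ^ 2)
  | ∞, (w : ℂ) => 2 / Real.sqrt (1 + ‖w‖ ^ 2)
  | ∞, ∞ => 0

/-- Spherical (great-circle) metric on the Riemann sphere of diameter 2. -/
noncomputable def sphDist (x y : OnePoint ℂ) : ℝ := 2 * Real.arcsin (chordal x y / 2)

/-- Value of the quotient `p/q` on the Riemann sphere. -/
noncomputable def toSph (p q : ℂ) : OnePoint ℂ :=
  if q = 0 then ∞ else ((p / q : ℂ) : OnePoint ℂ)


lemma chordal_nonneg (x y : OnePoint ℂ) : 0 ≤ chordal x y := by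
  cases x <;> cases y <;> simp [chordal] <;> positivity

lemma sphDist_nonneg (x y : OnePoint ℂ) : 0 ≤ sphDist x y := by
  have h := chordal_nonneg x y
  have : 0 ≤ Real.arcsin (chordal x y / 2) := Real.arcsin_nonneg.mpr (by linarith)
  unfold sphDist; linarith

lemma sphDist_le_pi (x y : OnePoint ℂ) : sphDist x y ≤ Real.pi := by
  unfold sphDist; linarith [Real.arcsin_le_pi_div_two (chordal x y / 2)]

lemma sqrt_one_add (r s : ℂ) (hs : s ≠ 0) :
    Real.sqrt (1 + ‖r / s‖ ^ 2) =
      Real.sqrt (‖r‖ ^ 2 + ‖s‖ ^ 2) / ‖s‖ := by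
  have hs' : (0:ℝ) < ‖s‖ := norm_pos_iff.mpr hs
  have h1 : 1 + ‖r / s‖ ^ 2 =
      (‖r‖ ^ 2 + ‖s‖ ^ 2) / ‖s‖ ^ 2 := by
    rw [norm_div, div_pow]
    field_simp
    ring
  rw [h1, Real.sqrt_div (by positivity), Real.sqrt_sq hs'.le]

lemma chordal_toSph (p q r s : ℂ) (h1 : ¬(p = 0 ∧ q = 0)) (h2 : ¬(r = 0 ∧ s = 0)) :
    chordal (toSph p q) (toSph r s) = 2 * ‖p * s - r * q‖ /
      (Real.sqrt (‖p‖ ^ 2 + ‖q‖ ^ 2) *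
       Real.sqrt (‖r‖ ^ 2 + ‖s‖ ^ 2)) := by
  by_cases hq : q = 0
  · have hp : p ≠ 0 := by tauto
    have hp' : (0:ℝ) < ‖p‖ := norm_pos_iff.mpr hp
    by_cases hs : s = 0
    · have hr : r ≠ 0 := by tauto
      simp [toSph, hq, hs, chordal]
    · have hs' : (0:ℝ) < ‖s‖ := norm_pos_iff.mpr hs
      have hS : (0:ℝ) < Real.sqrt (‖r‖ ^ 2 + ‖s‖ ^ 2) := by positivity
      simp only [toSph, hq, if_true, if_neg hs, chordal]
      rw [sqrt_one_add r s hs]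
      simp only [hq, norm_zero, mul_zero, sub_zero, norm_mul, ne_eq, OfNat.ofNat_ne_zero,
        not_false_eq_true, zero_pow, add_zero, Real.sqrt_sq hp'.le]
      field_simp
  · have hq' : (0:ℝ) < ‖q‖ := norm_pos_iff.mpr hq
    have hSq : (0:ℝ) < Real.sqrt (‖p‖ ^ 2 + ‖q‖ ^ 2) := by positivity
    by_cases hs : s = 0
    · have hr : r ≠ 0 := by tauto
      have hr' : (0:ℝ) < ‖r‖ := norm_pos_iff.mpr hr
      simp only [toSph, hs, if_true, if_neg hq, chordal]
      rw [sqrt_one_add p q hq]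
      simp only [hs, norm_zero, mul_zero, zero_sub, norm_neg, norm_mul, ne_eq,
        OfNat.ofNat_ne_zero, not_false_eq_true, zero_pow, add_zero, Real.sqrt_sq hr'.le]
      field_simp
    · have hs' : (0:ℝ) < ‖s‖ := norm_pos_iff.mpr hs
      have hSs : (0:ℝ) < Real.sqrt (‖r‖ ^ 2 + ‖s‖ ^ 2) := by positivity
      simp only [toSph, if_neg hq, if_neg hs, chordal]
      rw [sqrt_one_add p q hq, sqrt_one_add r s hs]
      have hnum : p / q - r / s = (p * s - r * q) / (q * s) := by
        field_simp
      rw [hnum, norm_div, norm_mul]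
      field_simp

lemma det_le (p q r s : ℂ) : ‖p * s - r * q‖ ≤
    Real.sqrt (‖p‖ ^ 2 + ‖q‖ ^ 2) *
      Real.sqrt (‖r‖ ^ 2 + ‖s‖ ^ 2) := by
  have h1 : ‖p * s - r * q‖ ≤
      ‖p‖ * ‖s‖ + ‖r‖ * ‖q‖ := by
    calc ‖p * s - r * q‖ ≤ ‖p * s‖ + ‖r * q‖ := by
          simpa using norm_sub_le (p * s) (r * q)
      _ = _ := by rw [norm_mul, norm_mul]
  set A := Real.sqrt (‖p‖ ^ 2 + ‖q‖ ^ 2) with hA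
  set B := Real.sqrt (‖r‖ ^ 2 + ‖s‖ ^ 2) with hB
  have hA2 : A ^ 2 = ‖p‖ ^ 2 + ‖q‖ ^ 2 := Real.sq_sqrt (by positivity)
  have hB2 : B ^ 2 = ‖r‖ ^ 2 + ‖s‖ ^ 2 := Real.sq_sqrt (by positivity)
  have hA0 : 0 ≤ A := Real.sqrt_nonneg _
  have hB0 : 0 ≤ B := Real.sqrt_nonneg _
  nlinarith [sq_nonneg (‖p‖ * ‖r‖ - ‖q‖ * ‖s‖),
    sq_nonneg (A * B - (‖p‖ * ‖s‖ + ‖r‖ * ‖q‖)),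
    norm_nonneg p, norm_nonneg q, norm_nonneg r, norm_nonneg s,
    mul_nonneg hA0 hB0, h1, norm_nonneg (p * s - r * q)]

lemma S_pos (p q : ℂ) (h : ¬(p = 0 ∧ q = 0)) :
    0 < Real.sqrt (‖p‖ ^ 2 + ‖q‖ ^ 2) := by
  rcases not_and_or.mp h with h | h
  · have := norm_pos_iff.mpr h
    exact Real.sqrt_pos.mpr (by nlinarith [sq_nonneg (‖q‖)])
  · have := norm_pos_iff.mpr h
    exact Real.sqrt_pos.mpr (by nlinarith [sq_nonneg (‖p‖)])

lemma pair_lower (p q r s : ℂ) (h1 : ¬(p = 0 ∧ q = 0)) (h2 : ¬(r = 0 ∧ s = 0))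
    (η : ℝ) (hη0 : 0 ≤ η) (hd : 2 * η ≤ sphDist (toSph p q) (toSph r s)) :
    Real.sin η * (Real.sqrt (‖p‖ ^ 2 + ‖q‖ ^ 2) *
      Real.sqrt (‖r‖ ^ 2 + ‖s‖ ^ 2)) ≤ ‖p * s - r * q‖ := by
  set A := Real.sqrt (‖p‖ ^ 2 + ‖q‖ ^ 2) with hA
  set B := Real.sqrt (‖r‖ ^ 2 + ‖s‖ ^ 2) with hB
  have hA0 : 0 < A := S_pos p q h1
  have hB0 : 0 < B := S_pos r s h2
  have hAB : 0 < A * B := mul_pos hA0 hB0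
  have hch : chordal (toSph p q) (toSph r s) = 2 * ‖p * s - r * q‖ / (A * B) :=
    chordal_toSph p q r s h1 h2
  set t : ℝ := ‖p * s - r * q‖ / (A * B) with ht
  have ht0 : 0 ≤ t := by positivity
  have ht1 : t ≤ 1 := by
    rw [ht, div_le_one₀ hAB]; exact det_le p q r s
  have hch2 : chordal (toSph p q) (toSph r s) / 2 = t := by rw [hch]; ring
  have harc : η ≤ Real.arcsin t := by
    have : sphDist (toSph p q) (toSph r s) = 2 * Real.arcsin t := by
      unfold sphDist; rw [hch2]
    linarith [hd, this ▸ hd]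
  have hsin : Real.sin η ≤ t := by
    have h3 : Real.sin η ≤ Real.sin (Real.arcsin t) :=
      Real.sin_le_sin_of_le_of_le_pi_div_two (by linarith [Real.pi_pos])
        (Real.arcsin_le_pi_div_two t) harc
    rwa [Real.sin_arcsin (by linarith) ht1] at h3
  calc Real.sin η * (A * B) ≤ t * (A * B) := by nlinarith
    _ = ‖p * s - r * q‖ := div_mul_cancel₀ _ (ne_of_gt hAB)

lemma const_of_dom (f g u v w : ℂ → ℂ) (hf : Differentiable ℂ f) (hg : Differentiable ℂ g)
    (hw : Differentiable ℂ w)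
    (hu0 : ∀ z, u z ≠ 0) (hv0 : ∀ z, v z ≠ 0) (hw0 : ∀ z, w z ≠ 0)
    (hu : Differentiable ℂ u) (hv : Differentiable ℂ v)
    (δ : ℝ) (hδ : 0 < δ)
    (H : ∀ z, δ * (‖f z‖ ^ 2 + ‖g z‖ ^ 2) * ‖w z‖ ≤
      ‖u z‖ * ‖v z‖) :
    ∀ z z', toSph (f z) (g z) = toSph (f z') (g z') := by
  set q1 : ℂ → ℂ := fun z => f z * g z * w z / (u z * v z) with hq1def
  set q2 : ℂ → ℂ := fun z => g z * g z * w z / (u z * v z) with hq2def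
  have huv : ∀ z, u z * v z ≠ 0 := fun z => mul_ne_zero (hu0 z) (hv0 z)
  have hq1 : Differentiable ℂ q1 := ((hf.mul hg).mul hw).div (hu.mul hv) huv
  have hq2 : Differentiable ℂ q2 := ((hg.mul hg).mul hw).div (hu.mul hv) huv
  have hb : ∀ (q : ℂ → ℂ), (∀ z, ‖q z‖ ≤ 1/δ) → Bornology.IsBounded (Set.range q) := by
    intro q hq
    rw [isBounded_iff_forall_norm_le]
    exact ⟨1/δ, by rintro x ⟨z, rfl⟩; simpa using hq z⟩
  have key : ∀ (h : ℂ → ℂ), (∀ z, ‖h z‖ * ‖g z‖ ≤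
      ‖f z‖ ^ 2 + ‖g z‖ ^ 2) →
      ∀ z, ‖h z * g z * w z / (u z * v z)‖ ≤ 1/δ := by
    intro h hh z
    have hwnn := norm_nonneg (w z)
    have huvpos : 0 < ‖u z‖ * ‖v z‖ :=
      mul_pos (norm_pos_iff.mpr (hu0 z)) (norm_pos_iff.mpr (hv0 z))
    simp only [norm_div, norm_mul]
    rw [div_le_div_iff₀ huvpos hδ]
    calc ‖h z‖ * ‖g z‖ * ‖w z‖ * δ
        = δ * (‖h z‖ * ‖g z‖) * ‖w z‖ := by ring
      _ ≤ δ * (‖f z‖ ^ 2 + ‖g z‖ ^ 2) * ‖w z‖ := by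
          nlinarith [mul_nonneg (mul_nonneg hδ.le (sub_nonneg.mpr (hh z))) hwnn]
      _ ≤ ‖u z‖ * ‖v z‖ := H z
      _ = 1 * (‖u z‖ * ‖v z‖) := by ring
  have c1 : ∀ z z', q1 z = q1 z' :=
    hq1.apply_eq_apply_of_bounded (hb q1 (key f (fun z => by
      nlinarith [sq_nonneg (‖f z‖ - ‖g z‖)])))
  have c2 : ∀ z z', q2 z = q2 z' :=
    hq2.apply_eq_apply_of_bounded (hb q2 (key g (fun z => by
      nlinarith [sq_nonneg (‖f z‖), sq_nonneg (‖g z‖)])))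
  intro z z'
  by_cases hz : g z = 0 <;> by_cases hz' : g z' = 0
  · simp [toSph, hz, hz']
  · exfalso
    have e2 : q2 z = q2 z' := c2 z z'
    have : q2 z = 0 := by simp [hq2def, hz]
    have hne : q2 z' ≠ 0 := by
      simp only [hq2def]
      exact div_ne_zero (mul_ne_zero (mul_ne_zero hz' hz') (hw0 z')) (huv z')
    exact hne (e2 ▸ this)
  · exfalso
    have e2 : q2 z = q2 z' := c2 z z'
    have : q2 z' = 0 := by simp [hq2def, hz']
    have hne : q2 z ≠ 0 := by
      simp only [hq2def]
      exact div_ne_zero (mul_ne_zero (mul_ne_zero hz hz) (hw0 z)) (huv z)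
    exact hne (e2.trans this)
  · have e1 : f z * g z * w z * (u z' * v z') = f z' * g z' * w z' * (u z * v z) :=
      (div_eq_div_iff (huv z) (huv z')).mp (c1 z z')
    have e2 : g z * g z * w z * (u z' * v z') = g z' * g z' * w z' * (u z * v z) :=
      (div_eq_div_iff (huv z) (huv z')).mp (c2 z z')
    have hK : g z' * w z' * u z * v z ≠ 0 :=
      mul_ne_zero (mul_ne_zero (mul_ne_zero hz' (hw0 z')) (hu0 z)) (hv0 z)
    have key2 : (f z * g z') * (g z' * w z' * u z * v z)
        = (f z' * g z) * (g z' * w z' * u z * v z) := by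
      linear_combination (g z) * e1 - (f z) * e2
    have hfg : f z * g z' = f z' * g z := mul_right_cancel₀ hK key2
    simp only [toSph, if_neg hz, if_neg hz']
    congr 1
    rw [div_eq_div_iff hz hz']
    exact hfg

lemma triple_bound {x y z e p' : ℝ} (hx : 0 ≤ x) (hy : 0 ≤ y) (hy' : y ≤ p')
    (hz : 0 ≤ z) (hz' : z ≤ p') (hp : 0 < p') (h : e ≤ x * y * z) : e ≤ x * p' ^ 2 := by
  calc e ≤ x * y * z := h
    _ ≤ x * y * p' := mul_le_mul_of_nonneg_left hz' (mul_nonneg hx hy)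
    _ = x * (y * p') := by ring
    _ ≤ x * (p' * p') := mul_le_mul_of_nonneg_left (mul_le_mul_of_nonneg_right hy' hp.le) hx
    _ = x * p' ^ 2 := by ring
/-- A sphere-valued function is meromorphic on `U` (possibly `≡ ∞`) iff it is a quotient
of two holomorphic functions without common zeros. -/
def MeromorphicOnSph (U : Set ℂ) (a : ℂ → OnePoint ℂ) : Prop :=
  ∃ f g : ℂ → ℂ, DifferentiableOn ℂ f U ∧ DifferentiableOn ℂ g U ∧
    (∀ z ∈ U, ¬(f z = 0 ∧ g z = 0)) ∧ ∀ z ∈ U, a z = toSph (f z) (g z)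

/-- If `a, b, c` are meromorphic on all of `ℂ` (or `≡ ∞`) and the product of their mutual
spherical distances is bounded below by some `ε > 0`, then all three are constant. -/
theorem stmt_0 (a b c : ℂ → OnePoint ℂ)
    (ha : MeromorphicOnSph Set.univ a) (hb : MeromorphicOnSph Set.univ b)
    (hc : MeromorphicOnSph Set.univ c)
    (ε : ℝ) (hε : 0 < ε)
    (hsep : ∀ z : ℂ, ε ≤ sphDist (a z) (b z) * sphDist (a z) (c z) * sphDist (b z) (c z)) :
    (∀ z w : ℂ, a z = a w) ∧ (∀ z w : ℂ, b z = b w) ∧ (∀ z w : ℂ, c z = c w) := by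
  obtain ⟨f₁, g₁, hf₁, hg₁, hn₁, hr₁⟩ := ha
  obtain ⟨f₂, g₂, hf₂, hg₂, hn₂, hr₂⟩ := hb
  obtain ⟨f₃, g₃, hf₃, hg₃, hn₃, hr₃⟩ := hc
  replace hf₁ : Differentiable ℂ f₁ := differentiableOn_univ.mp hf₁
  replace hg₁ : Differentiable ℂ g₁ := differentiableOn_univ.mp hg₁
  replace hf₂ : Differentiable ℂ f₂ := differentiableOn_univ.mp hf₂
  replace hg₂ : Differentiable ℂ g₂ := differentiableOn_univ.mp hg₂
  replace hf₃ : Differentiable ℂ f₃ := differentiableOn_univ.mp hf₃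
  replace hg₃ : Differentiable ℂ g₃ := differentiableOn_univ.mp hg₃
  replace hn₁ : ∀ z, ¬(f₁ z = 0 ∧ g₁ z = 0) := fun z => hn₁ z (Set.mem_univ z)
  replace hn₂ : ∀ z, ¬(f₂ z = 0 ∧ g₂ z = 0) := fun z => hn₂ z (Set.mem_univ z)
  replace hn₃ : ∀ z, ¬(f₃ z = 0 ∧ g₃ z = 0) := fun z => hn₃ z (Set.mem_univ z)
  replace hr₁ : ∀ z, a z = toSph (f₁ z) (g₁ z) := fun z => hr₁ z (Set.mem_univ z)
  replace hr₂ : ∀ z, b z = toSph (f₂ z) (g₂ z) := fun z => hr₂ z (Set.mem_univ z)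
  replace hr₃ : ∀ z, c z = toSph (f₃ z) (g₃ z) := fun z => hr₃ z (Set.mem_univ z)
  set S₁ : ℂ → ℝ := fun z => Real.sqrt (‖f₁ z‖ ^ 2 + ‖g₁ z‖ ^ 2)
    with hS₁def
  set S₂ : ℂ → ℝ := fun z => Real.sqrt (‖f₂ z‖ ^ 2 + ‖g₂ z‖ ^ 2)
    with hS₂def
  set S₃ : ℂ → ℝ := fun z => Real.sqrt (‖f₃ z‖ ^ 2 + ‖g₃ z‖ ^ 2)
    with hS₃def
  have hS₁ : ∀ z, 0 < S₁ z := fun z => S_pos _ _ (hn₁ z)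
  have hS₂ : ∀ z, 0 < S₂ z := fun z => S_pos _ _ (hn₂ z)
  have hS₃ : ∀ z, 0 < S₃ z := fun z => S_pos _ _ (hn₃ z)
  set W₁₂ : ℂ → ℂ := fun z => f₁ z * g₂ z - f₂ z * g₁ z with hW12def
  set W₁₃ : ℂ → ℂ := fun z => f₁ z * g₃ z - f₃ z * g₁ z with hW13def
  set W₂₃ : ℂ → ℂ := fun z => f₂ z * g₃ z - f₃ z * g₂ z with hW23def
  have hW12d : Differentiable ℂ W₁₂ := (hf₁.mul hg₂).sub (hf₂.mul hg₁)
  have hW13d : Differentiable ℂ W₁₃ := (hf₁.mul hg₃).sub (hf₃.mul hg₁)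
  have hW23d : Differentiable ℂ W₂₃ := (hf₂.mul hg₃).sub (hf₃.mul hg₂)
  have hπ := Real.pi_pos
  set η : ℝ := ε / (2 * Real.pi ^ 2) with hηdef
  have hη0 : 0 < η := by positivity
  have hεπ : ε ≤ Real.pi ^ 3 := by
    have h0 := hsep 0
    have t1 := sphDist_nonneg (a 0) (b 0); have t2 := sphDist_le_pi (a 0) (b 0)
    have t3 := sphDist_nonneg (a 0) (c 0); have t4 := sphDist_le_pi (a 0) (c 0)
    have t5 := sphDist_nonneg (b 0) (c 0); have t6 := sphDist_le_pi (b 0) (c 0)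
    have := triple_bound t1 t3 t4 t5 t6 hπ h0
    nlinarith [this, mul_nonneg t1 t3]
  set δ : ℝ := Real.sin η with hδdef
  have hδ : 0 < δ := by
    apply Real.sin_pos_of_pos_of_lt_pi hη0
    rw [hηdef, div_lt_iff₀ (by positivity)]
    nlinarith
  -- lower bounds on sphDist for each pair
  have hgen : ∀ (x y w' : ℝ), 0 ≤ x → 0 ≤ y → y ≤ Real.pi → 0 ≤ w' → w' ≤ Real.pi →
      ε ≤ x * y * w' → 2 * η ≤ x := by
    intro x y w' hx hy hy' hw hw' h
    have := triple_bound hx hy hy' hw hw' hπ h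
    rw [hηdef]
    rw [show 2 * (ε / (2 * Real.pi ^ 2)) = ε / Real.pi ^ 2 by ring, div_le_iff₀ (by positivity)]
    linarith
  have hd12 : ∀ z, 2 * η ≤ sphDist (toSph (f₁ z) (g₁ z)) (toSph (f₂ z) (g₂ z)) := by
    intro z
    rw [← hr₁ z, ← hr₂ z]
    exact hgen _ _ _ (sphDist_nonneg _ _) (sphDist_nonneg (a z) (c z))
      (sphDist_le_pi _ _) (sphDist_nonneg (b z) (c z)) (sphDist_le_pi _ _) (hsep z)
  have hd13 : ∀ z, 2 * η ≤ sphDist (toSph (f₁ z) (g₁ z)) (toSph (f₃ z) (g₃ z)) := by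
    intro z
    rw [← hr₁ z, ← hr₃ z]
    refine hgen _ _ _ (sphDist_nonneg _ _) (sphDist_nonneg (a z) (b z))
      (sphDist_le_pi _ _) (sphDist_nonneg (b z) (c z)) (sphDist_le_pi _ _) ?_
    calc ε ≤ sphDist (a z) (b z) * sphDist (a z) (c z) * sphDist (b z) (c z) := hsep z
      _ = sphDist (a z) (c z) * sphDist (a z) (b z) * sphDist (b z) (c z) := by ring
  have hd23 : ∀ z, 2 * η ≤ sphDist (toSph (f₂ z) (g₂ z)) (toSph (f₃ z) (g₃ z)) := by
    intro z
    rw [← hr₂ z, ← hr₃ z]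
    refine hgen _ _ _ (sphDist_nonneg _ _) (sphDist_nonneg (a z) (b z))
      (sphDist_le_pi _ _) (sphDist_nonneg (a z) (c z)) (sphDist_le_pi _ _) ?_
    calc ε ≤ sphDist (a z) (b z) * sphDist (a z) (c z) * sphDist (b z) (c z) := hsep z
      _ = sphDist (b z) (c z) * sphDist (a z) (b z) * sphDist (a z) (c z) := by ring
  have k12 : ∀ z, δ * (S₁ z * S₂ z) ≤ ‖W₁₂ z‖ := fun z =>
    pair_lower _ _ _ _ (hn₁ z) (hn₂ z) η hη0.le (hd12 z)
  have k13 : ∀ z, δ * (S₁ z * S₃ z) ≤ ‖W₁₃ z‖ := fun z =>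
    pair_lower _ _ _ _ (hn₁ z) (hn₃ z) η hη0.le (hd13 z)
  have k23 : ∀ z, δ * (S₂ z * S₃ z) ≤ ‖W₂₃ z‖ := fun z =>
    pair_lower _ _ _ _ (hn₂ z) (hn₃ z) η hη0.le (hd23 z)
  have u12 : ∀ z, ‖W₁₂ z‖ ≤ S₁ z * S₂ z := fun z => det_le _ _ _ _
  have u13 : ∀ z, ‖W₁₃ z‖ ≤ S₁ z * S₃ z := fun z => det_le _ _ _ _
  have u23 : ∀ z, ‖W₂₃ z‖ ≤ S₂ z * S₃ z := fun z => det_le _ _ _ _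
  have hW12n : ∀ z, W₁₂ z ≠ 0 := by
    intro z h
    have := k12 z
    rw [h, norm_zero] at this
    nlinarith [mul_pos hδ (mul_pos (hS₁ z) (hS₂ z))]
  have hW13n : ∀ z, W₁₃ z ≠ 0 := by
    intro z h
    have := k13 z
    rw [h, norm_zero] at this
    nlinarith [mul_pos hδ (mul_pos (hS₁ z) (hS₃ z))]
  have hW23n : ∀ z, W₂₃ z ≠ 0 := by
    intro z h
    have := k23 z
    rw [h, norm_zero] at this
    nlinarith [mul_pos hδ (mul_pos (hS₂ z) (hS₃ z))]
  have sq₁ : ∀ z, ‖f₁ z‖ ^ 2 + ‖g₁ z‖ ^ 2 = (S₁ z) ^ 2 := fun z =>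
    (Real.sq_sqrt (by positivity)).symm
  have sq₂ : ∀ z, ‖f₂ z‖ ^ 2 + ‖g₂ z‖ ^ 2 = (S₂ z) ^ 2 := fun z =>
    (Real.sq_sqrt (by positivity)).symm
  have sq₃ : ∀ z, ‖f₃ z‖ ^ 2 + ‖g₃ z‖ ^ 2 = (S₃ z) ^ 2 := fun z =>
    (Real.sq_sqrt (by positivity)).symm
  have Ha : ∀ z z', toSph (f₁ z) (g₁ z) = toSph (f₁ z') (g₁ z') := by
    apply const_of_dom f₁ g₁ W₁₂ W₁₃ W₂₃ hf₁ hg₁ hW23d hW12n hW13n hW23n hW12d hW13d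
      (δ ^ 2) (by positivity)
    intro z
    rw [sq₁ z]
    calc δ ^ 2 * (S₁ z) ^ 2 * ‖W₂₃ z‖
        ≤ δ ^ 2 * (S₁ z) ^ 2 * (S₂ z * S₃ z) :=
          mul_le_mul_of_nonneg_left (u23 z) (by positivity)
      _ = (δ * (S₁ z * S₂ z)) * (δ * (S₁ z * S₃ z)) := by ring
      _ ≤ ‖W₁₂ z‖ * ‖W₁₃ z‖ :=
          mul_le_mul (k12 z) (k13 z) (by positivity) (norm_nonneg _)
  have Hb : ∀ z z', toSph (f₂ z) (g₂ z) = toSph (f₂ z') (g₂ z') := by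
    apply const_of_dom f₂ g₂ W₁₂ W₂₃ W₁₃ hf₂ hg₂ hW13d hW12n hW23n hW13n hW12d hW23d
      (δ ^ 2) (by positivity)
    intro z
    rw [sq₂ z]
    calc δ ^ 2 * (S₂ z) ^ 2 * ‖W₁₃ z‖
        ≤ δ ^ 2 * (S₂ z) ^ 2 * (S₁ z * S₃ z) :=
          mul_le_mul_of_nonneg_left (u13 z) (by positivity)
      _ = (δ * (S₁ z * S₂ z)) * (δ * (S₂ z * S₃ z)) := by ring
      _ ≤ ‖W₁₂ z‖ * ‖W₂₃ z‖ :=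
          mul_le_mul (k12 z) (k23 z) (by positivity) (norm_nonneg _)
  have Hc : ∀ z z', toSph (f₃ z) (g₃ z) = toSph (f₃ z') (g₃ z') := by
    apply const_of_dom f₃ g₃ W₁₃ W₂₃ W₁₂ hf₃ hg₃ hW12d hW13n hW23n hW12n hW13d hW23d
      (δ ^ 2) (by positivity)
    intro z
    rw [sq₃ z]
    calc δ ^ 2 * (S₃ z) ^ 2 * ‖W₁₂ z‖
        ≤ δ ^ 2 * (S₃ z) ^ 2 * (S₁ z * S₂ z) :=
          mul_le_mul_of_nonneg_left (u12 z) (by positivity)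
      _ = (δ * (S₁ z * S₃ z)) * (δ * (S₂ z * S₃ z)) := by ring
      _ ≤ ‖W₁₃ z‖ * ‖W₂₃ z‖ :=
          mul_le_mul (k13 z) (k23 z) (by positivity) (norm_nonneg _)
  exact ⟨fun z w => by rw [hr₁ z, hr₁ w]; exact Ha z w,
    fun z w => by rw [hr₂ z, hr₂ w]; exact Hb z w,
    fun z w => by rw [hr₃ z, hr₃ w]; exact Hc z w⟩
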